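/- For all real x with 0 < x < 1, 2 + (17/45) · x³ · arctan x < (arcsin x / x)^2 + (arctan x / x). -/

import Mathlib

open Real

lemma arctan_lb {x : ℝ} (hx : 0 < x) :
    x - x^3/3 + x^5/5 - x^7/7 < arctan x := by
  set f : ℝ → ℝ := fun y => arctan y - (y - y^3/3 + y^5/5 - y^7/7) with hf
  have hderiv : ∀ y : ℝ, HasDerivAt f (1/(1+y^2) - (1 - y^2 + y^4 - y^6)) y := by
    intro y
    have h1 := Real.hasDerivAt_arctan y
    have h2 : HasDerivAt (fun y : ℝ => y - y^3/3 + y^5/5 - y^7/7)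
        (1 - y^2 + y^4 - y^6) y := by
      have : HasDerivAt (fun y : ℝ => y - y^3/3 + y^5/5 - y^7/7)
          (1 - (3*y^2)/3 + (5*y^4)/5 - (7*y^6)/7) y := by
        exact (((hasDerivAt_id y).sub ((hasDerivAt_pow 3 y).div_const 3)).add
          ((hasDerivAt_pow 5 y).div_const 5)).sub ((hasDerivAt_pow 7 y).div_const 7)
      convert this using 1; ring
    exact h1.sub h2
  have hmono : StrictMonoOn f (Set.Ici (0:ℝ)) := by
    apply strictMonoOn_of_deriv_pos (convex_Ici 0)
    · exact Continuous.continuousOn (by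
        exact (Real.continuous_arctan.sub (by continuity)))
    · intro y hy
      rw [interior_Ici] at hy
      rw [(hderiv y).deriv]
      have h0 : (0:ℝ) < 1 + y^2 := by positivity
      have key : 1/(1+y^2) - (1 - y^2 + y^4 - y^6) = y^8/(1+y^2) := by
        field_simp; ring
      rw [key]
      exact div_pos (pow_pos hy 8) h0
  have := hmono (Set.self_mem_Ici) (Set.mem_Ici.2 hx.le) hx
  simp only [hf, arctan_zero] at this
  nlinarith [this]

lemma arcsin_lb {x : ℝ} (hx : 0 < x) (hx1 : x < 1) :
    x + x^3/6 + 3*x^5/40 + 5*x^7/112 < arcsin x := by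
  set f : ℝ → ℝ := fun y => arcsin y - (y + y^3/6 + 3*y^5/40 + 5*y^7/112) with hf
  have hmono : StrictMonoOn f (Set.Icc (0:ℝ) x) := by
    apply strictMonoOn_of_deriv_pos (convex_Icc 0 x)
    · exact Continuous.continuousOn (by
        exact (Real.continuous_arcsin.sub (by continuity)))
    · intro y hy
      rw [interior_Icc] at hy
      obtain ⟨hy0, hyx⟩ := hy
      have hy1 : y < 1 := lt_trans hyx hx1
      have hderiv : HasDerivAt f
          (1 / Real.sqrt (1 - y^2) - (1 + y^2/2 + 3*y^4/8 + 5*y^6/16)) y := by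
        have h1 := Real.hasDerivAt_arcsin (by linarith : y ≠ -1) (ne_of_lt hy1)
        have h2 : HasDerivAt (fun y : ℝ => y + y^3/6 + 3*y^5/40 + 5*y^7/112)
            (1 + y^2/2 + 3*y^4/8 + 5*y^6/16) y := by
          have : HasDerivAt (fun y : ℝ => y + y^3/6 + 3*y^5/40 + 5*y^7/112)
              (1 + (3*y^2)/6 + 3*(5*y^4)/40 + 5*(7*y^6)/112) y := by
            exact (((hasDerivAt_id y).add ((hasDerivAt_pow 3 y).div_const 6)).add
              (((hasDerivAt_pow 5 y).const_mul 3).div_const 40)).add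
              (((hasDerivAt_pow 7 y).const_mul 5).div_const 112)
          convert this using 1; ring
        exact h1.sub h2
      rw [hderiv.deriv]
      have hs : (0:ℝ) < Real.sqrt (1 - y^2) := by
        apply Real.sqrt_pos.2; nlinarith
      have hs2 : (Real.sqrt (1 - y^2))^2 = 1 - y^2 := Real.sq_sqrt (by nlinarith)
      set s := Real.sqrt (1 - y^2)
      have hQ : (0:ℝ) < 1 + y^2/2 + 3*y^4/8 + 5*y^6/16 := by positivity
      have hQs2 : ((1 + y^2/2 + 3*y^4/8 + 5*y^6/16) * s)^2 < 1 := by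
        have he : ((1 + y^2/2 + 3*y^4/8 + 5*y^6/16) * s)^2
            = (1 + y^2/2 + 3*y^4/8 + 5*y^6/16)^2 * (1 - y^2) := by rw [mul_pow, hs2]
        rw [he]
        nlinarith [pow_pos hy0 8, pow_pos hy0 10, pow_pos hy0 12, pow_pos hy0 14]
      have hQs : (1 + y^2/2 + 3*y^4/8 + 5*y^6/16) * s < 1 := by
        nlinarith [mul_pos hQ hs]
      have : (1 + y^2/2 + 3*y^4/8 + 5*y^6/16) < 1 / s := by
        rw [lt_div_iff₀ hs]; exact hQs
      linarith
  have := hmono (Set.left_mem_Icc.2 hx.le) (Set.right_mem_Icc.2 hx.le) hx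
  simp only [hf, arcsin_zero] at this
  nlinarith [this]

theorem stmt2 (x : ℝ) (h1 : 0 < x) (h2 : x < 1) :
    2 + (17/45) * x^3 * arctan x < (arcsin x / x)^2 + arctan x / x := by
  have hB := arctan_lb h1
  have hP := arcsin_lb h1 h2
  set a := arctan x
  set s := arcsin x
  have hPpos : (0:ℝ) < x + x^3/6 + 3*x^5/40 + 5*x^7/112 := by positivity
  have hs2 : (x + x^3/6 + 3*x^5/40 + 5*x^7/112)^2 < s^2 := by nlinarith
  have hxsq : x^2 < 1 := by nlinarith
  have hx4 : x^4 < 1 := by nlinarith [sq_nonneg x, sq_nonneg (x^2)]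
  have hcoef : 0 < x - 17/45*x^5 := by
    nlinarith [mul_pos h1 (by linarith : (0:ℝ) < 1 - 17/45*x^4)]
  have ha2 : (x - x^3/3 + x^5/5 - x^7/7) * (x - 17/45*x^5)
      < a * (x - 17/45*x^5) := mul_lt_mul_of_pos_right hB hcoef
  -- key polynomial positivity
  have hFq : 0 < 92/945 - 5549/100800*x^2 + 1223/20160*x^4 + 25/12544*x^6 := by
    nlinarith [sq_nonneg (x^2 - 4537/10000), pow_pos h1 6, sq_nonneg x]
  have hF : 0 < (x + x^3/6 + 3*x^5/40 + 5*x^7/112)^2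
      + (x - x^3/3 + x^5/5 - x^7/7) * (x - 17/45*x^5) - 2*x^2 := by
    have hx8 : (0:ℝ) < x^8 := by positivity
    nlinarith [mul_pos hx8 hFq]
  have key : (2 + 17/45 * x^3 * a) * x^2 < s^2 + a * x := by nlinarith
  have hx2 : (0:ℝ) < x^2 := by positivity
  have e1 : 2 + 17/45 * x^3 * a = ((2 + 17/45 * x^3 * a) * x^2) / x^2 :=
    (mul_div_cancel_right₀ _ (ne_of_gt hx2)).symm
  have e2 : (s / x)^2 + a / x = (s^2 + a * x) / x^2 := by
    field_simp
  rw [e1, e2]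
  exact div_lt_div_of_pos_right key hx2
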